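/- arXiv:1812.01456 — 2 statements merged into one kernel-verified Lean document; each statement's English description precedes it below -/
import Mathlib

section
/- Let ⟨·,·⟩ have signature (p,q) on ℂⁿ with p ≠ q, let V ⊂ ℂⁿ be maximal isotropic, and let M : ℂⁿ → ℂⁿ be a linear map with image in V, vanishing on V ⊕ sV and on a complement of a line in (V⊕sV)^⊥. Then with N := M - M*, one has M² = (M*)² = M*M = 0 and hence N³ = 0. -/
open Matrix

/-- The matrix `s = diag(-I_p, I_q)` defining the signature-`(p,q)` Hermitian form on `ℂⁿ`. -/
noncomputable def sig (p n : ℕ) : Matrix (Fin n) (Fin n) ℂ :=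
  Matrix.diagonal fun i => if (i : ℕ) < p then -1 else 1

/-- The Hermitian form `⟨v,w⟩ = -∑_{i<p} v̄ᵢwᵢ + ∑_{i≥p} v̄ᵢwᵢ = v̄ᵗ s w`. -/
noncomputable def pqform (p n : ℕ) (v w : Fin n → ℂ) : ℂ :=
  star v ⬝ᵥ (sig p n *ᵥ w)

/-- The adjoint `A* = s Āᵗ s` with respect to the signature-`(p,q)` form. -/
noncomputable def pqadj (p n : ℕ) (A : Matrix (Fin n) (Fin n) ℂ) : Matrix (Fin n) (Fin n) ℂ :=
  sig p n * Aᴴ * sig p n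

lemma sig_mul_sig (p n : ℕ) : sig p n * sig p n = 1 := by
  unfold sig
  rw [Matrix.diagonal_mul_diagonal]
  ext i j
  by_cases h : (i:ℕ) < p <;> simp [Matrix.diagonal, Matrix.one_apply, h]

lemma adj_prop (p n : ℕ) (M : Matrix (Fin n) (Fin n) ℂ) (x y : Fin n → ℂ) :
    pqform p n x (pqadj p n M *ᵥ y) = pqform p n (M *ᵥ x) y := by
  unfold pqform pqadj
  rw [star_mulVec, ← Matrix.mulVec_mulVec, ← Matrix.mulVec_mulVec, Matrix.mulVec_mulVec,
    sig_mul_sig, Matrix.one_mulVec, Matrix.dotProduct_mulVec]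

lemma nondeg (p n : ℕ) (z : Fin n → ℂ) (h : ∀ x, pqform p n x z = 0) : z = 0 := by
  have hs : ∀ i, (sig p n *ᵥ z) i = 0 := by
    intro i
    have := h (Pi.single i 1)
    unfold pqform at this
    simpa [dotProduct, Pi.single_apply] using this
  have h0 : sig p n *ᵥ z = 0 := funext hs
  have := congrArg (fun v => sig p n *ᵥ v) h0
  simpa [Matrix.mulVec_mulVec, sig_mul_sig, Matrix.one_mulVec] using this

lemma eqz {n : ℕ} (A : Matrix (Fin n) (Fin n) ℂ) (h : ∀ y, A *ᵥ y = 0) : A = 0 := by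
  ext i j
  have := congrFun (h (Pi.single j 1)) i
  simpa [Matrix.mulVec, dotProduct, Pi.single_apply] using this

theorem stmt_14 (p q n : ℕ) (hn : n = p + q) (hpq : p ≠ q)
    (V : Submodule ℂ (Fin n → ℂ))
    (hiso : ∀ v ∈ V, ∀ w ∈ V, pqform p n v w = 0)
    (hmax : ∀ W : Submodule ℂ (Fin n → ℂ),
      V ≤ W → (∀ v ∈ W, ∀ w ∈ W, pqform p n v w = 0) → W = V)
    (M : Matrix (Fin n) (Fin n) ℂ)
    (himM : ∀ x : Fin n → ℂ, M *ᵥ x ∈ V)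
    (hMV : ∀ x ∈ V, M *ᵥ x = 0)
    (hMsV : ∀ x ∈ V, M *ᵥ (sig p n *ᵥ x) = 0)
    (hline : ∃ w : Fin n → ℂ,
      (∀ y ∈ V ⊔ Submodule.map (Matrix.mulVecLin (sig p n)) V, pqform p n y w = 0) ∧
      ∀ u : Fin n → ℂ,
        (∀ y ∈ V ⊔ Submodule.map (Matrix.mulVecLin (sig p n)) V, pqform p n y u = 0) →
        pqform p n w u = 0 → M *ᵥ u = 0) :
    M * M = 0 ∧ pqadj p n M * pqadj p n M = 0 ∧ pqadj p n M * M = 0 ∧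
      (M - pqadj p n M) ^ 3 = 0 := by
  set A := pqadj p n M with hA
  have hM2 : M * M = 0 := by
    apply eqz; intro y
    rw [← Matrix.mulVec_mulVec]
    exact hMV _ (himM y)
  have hAM : A * M = 0 := by
    apply eqz; intro y
    rw [← Matrix.mulVec_mulVec]
    apply nondeg
    intro x
    rw [adj_prop]
    exact hiso _ (himM x) _ (himM y)
  have hA2 : A * A = 0 := by
    have key : A * A = sig p n * (M * M)ᴴ * sig p n := by
      rw [hA]
      unfold pqadj
      rw [Matrix.conjTranspose_mul]
      have h := sig_mul_sig p n
      calc sig p n * Mᴴ * sig p n * (sig p n * Mᴴ * sig p n)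
          = sig p n * Mᴴ * (sig p n * sig p n) * Mᴴ * sig p n := by
            noncomm_ring
        _ = sig p n * (Mᴴ * Mᴴ) * sig p n := by rw [h]; noncomm_ring
    rw [key, hM2]
    simp
  refine ⟨hM2, hA2, hAM, ?_⟩
  have hsq : (M - A) * (M - A) = -(M * A) := by
    rw [sub_mul, mul_sub, mul_sub, hM2, hAM, hA2]
    simp
  rw [pow_succ, pow_two, hsq, neg_mul, mul_sub, mul_assoc, mul_assoc, hAM, hA2]
  simp
end

section
/- Let V ⊂ ℂⁿ be isotropic for the signature-(p,q) form, let v ∈ V and w ∉ V^⊥ with ⟨v,w⟩ purely imaginary. Then there exists a linear map N : ℂⁿ → ℂⁿ with N* = -N, N² = 0, rank N ≤ 2, N(V^⊥) = 0, im N ⊂ V, and N(w) = v. -/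
open Matrix

noncomputable def Mab (p n : ℕ) (a b : Fin n → ℂ) : Matrix (Fin n) (Fin n) ℂ :=
  vecMulVec b (sig p n *ᵥ star a)

lemma sig_apply (p n : ℕ) (i j : Fin n) :
    sig p n i j = if i = j then (if (i:ℕ) < p then -1 else 1) else 0 := by
  simp [sig, Matrix.diagonal_apply]

lemma Mab_apply (p n : ℕ) (a b : Fin n → ℂ) (i j : Fin n) :
    Mab p n a b i j = b i * ((if (j:ℕ) < p then -1 else 1) * star (a j)) := by
  simp only [Mab, vecMulVec_apply, mulVec, dotProduct, sig_apply]
  congr 1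
  rw [Finset.sum_eq_single j]
  · simp
  · intro b _ hb; simp [Ne.symm hb]
  · simp

lemma pqform_eq (p n : ℕ) (a x : Fin n → ℂ) :
    pqform p n a x = ∑ j, star (a j) * ((if (j:ℕ) < p then -1 else 1) * x j) := by
  simp only [pqform, dotProduct, mulVec, sig_apply, Pi.star_apply]
  refine Finset.sum_congr rfl fun j _ => ?_
  congr 1
  rw [Finset.sum_eq_single j]
  · simp
  · intro b _ hb; simp [Ne.symm hb]
  · simp

lemma Mab_mulVec (p n : ℕ) (a b x : Fin n → ℂ) :
    Mab p n a b *ᵥ x = pqform p n a x • b := by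
  ext i
  simp only [mulVec, dotProduct, Mab_apply, pqform_eq, Pi.smul_apply, smul_eq_mul,
    Finset.sum_mul]
  refine Finset.sum_congr rfl fun j _ => ?_
  ring

lemma pqadj_apply (p n : ℕ) (A : Matrix (Fin n) (Fin n) ℂ) (i j : Fin n) :
    pqadj p n A i j =
      (if (i:ℕ) < p then -1 else 1) * star (A j i) * (if (j:ℕ) < p then -1 else 1) := by
  simp [pqadj, sig, Matrix.diagonal_mul, Matrix.mul_diagonal]

lemma pqadj_Mab (p n : ℕ) (a b : Fin n → ℂ) :
    pqadj p n (Mab p n a b) = Mab p n b a := by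
  ext i j
  rw [pqadj_apply, Mab_apply, Mab_apply]
  by_cases hi : (i:ℕ) < p <;> by_cases hj : (j:ℕ) < p <;>
    simp [hi, hj, star_mul'] <;> ring

lemma pqadj_add (p n : ℕ) (A B : Matrix (Fin n) (Fin n) ℂ) :
    pqadj p n (A + B) = pqadj p n A + pqadj p n B := by
  simp [pqadj, conjTranspose_add, Matrix.mul_add, Matrix.add_mul]

lemma pqadj_smul (p n : ℕ) (c : ℂ) (A : Matrix (Fin n) (Fin n) ℂ) :
    pqadj p n (c • A) = star c • pqadj p n A := by
  simp [pqadj, conjTranspose_smul, Matrix.mul_smul, Matrix.smul_mul]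

lemma pqform_smul_right (p n : ℕ) (a : Fin n → ℂ) (c : ℂ) (x : Fin n → ℂ) :
    pqform p n a (c • x) = c * pqform p n a x := by
  simp [pqform_eq, Finset.mul_sum]; refine Finset.sum_congr rfl fun j _ => ?_; ring

lemma pqform_add_right (p n : ℕ) (a x y : Fin n → ℂ) :
    pqform p n a (x + y) = pqform p n a x + pqform p n a y := by
  simp only [pqform_eq, ← Finset.sum_add_distrib, Pi.add_apply]
  refine Finset.sum_congr rfl fun j _ => ?_; ring

theorem stmt_18 (p q n : ℕ) (hn : n = p + q)
    (V : Submodule ℂ (Fin n → ℂ))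
    (hiso : ∀ x ∈ V, ∀ y ∈ V, pqform p n x y = 0)
    (v w : Fin n → ℂ) (hv : v ∈ V)
    (hw : ¬ (∀ y ∈ V, pqform p n y w = 0))
    (hvw : (pqform p n v w).re = 0) :
    ∃ N : Matrix (Fin n) (Fin n) ℂ,
      pqadj p n N = -N ∧ N * N = 0 ∧ N.rank ≤ 2 ∧
      (∀ x : Fin n → ℂ, (∀ y ∈ V, pqform p n y x = 0) → N *ᵥ x = 0) ∧
      (∀ x : Fin n → ℂ, N *ᵥ x ∈ V) ∧
      N *ᵥ w = v := by
  push_neg at hw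
  obtain ⟨u, hu, hc⟩ := hw
  set c : ℂ := pqform p n u w with hcdef
  set d : ℂ := pqform p n v w with hddef
  have hdbar : star d = -d := by
    have : d.re = 0 := hvw
    apply Complex.ext <;> simp [Complex.conj_re, Complex.conj_im, this]
  have huu : pqform p n u u = 0 := hiso u hu u hu
  have huv : pqform p n u v = 0 := hiso u hu v hv
  have hvu : pqform p n v u = 0 := hiso v hv u hu
  have hvv : pqform p n v v = 0 := hiso v hv v hv
  set α : ℂ := c⁻¹ with hα
  set β : ℂ := d * (c * star c)⁻¹ with hβ
  set N : Matrix (Fin n) (Fin n) ℂ :=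
    α • Mab p n u v - (star α) • Mab p n v u + β • Mab p n u u with hN
  have hcs : star c ≠ 0 := star_ne_zero.mpr hc
  have hNmul : ∀ x, N *ᵥ x =
      (α * pqform p n u x) • v +
      (β * pqform p n u x - star α * pqform p n v x) • u := by
    intro x
    simp only [hN, Matrix.add_mulVec, Matrix.sub_mulVec, Matrix.smul_mulVec,
      Mab_mulVec]
    ext i
    simp only [Pi.add_apply, Pi.sub_apply, Pi.smul_apply, smul_eq_mul]
    ring
  have hform_mul : ∀ x y : Fin n → ℂ, ∀ (t s' : ℂ),
      pqform p n x (t • v + s' • u) = t * pqform p n x v + s' * pqform p n x u := by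
    intro x y t s'
    rw [pqform_add_right, pqform_smul_right, pqform_smul_right]
  refine ⟨N, ?_, ?_, ?_, ?_, ?_, ?_⟩
  · -- adjoint
    have hβbar : star β = -β := by
      rw [hβ, star_mul', star_inv₀, star_mul', star_star, hdbar, mul_comm (star c) c]
      ring
    simp only [hN, smul_sub, smul_add]
    rw [sub_eq_add_neg, pqadj_add, pqadj_add, pqadj_smul, pqadj_Mab]
    have : pqadj p n (-(star α • Mab p n v u)) = -(α • Mab p n u v) := by
      have h1 : -(star α • Mab p n v u) = (-star α) • Mab p n v u := by
        rw [neg_smul]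
      rw [h1, pqadj_smul, pqadj_Mab]
      simp
    rw [this, pqadj_smul, pqadj_Mab, hβbar]
    ext i j
    simp only [Matrix.add_apply, Matrix.neg_apply, Matrix.sub_apply, Matrix.smul_apply,
      smul_eq_mul]
    ring
  · -- N² = 0
    have key : ∀ x, N *ᵥ (N *ᵥ x) = 0 := by
      intro x
      rw [hNmul x, hNmul _]
      have h1 : pqform p n u ((α * pqform p n u x) • v +
          (β * pqform p n u x - star α * pqform p n v x) • u) = 0 := by
        rw [pqform_add_right, pqform_smul_right, pqform_smul_right, huv, huu]; ring
      have h2 : pqform p n v ((α * pqform p n u x) • v +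
          (β * pqform p n u x - star α * pqform p n v x) • u) = 0 := by
        rw [pqform_add_right, pqform_smul_right, pqform_smul_right, hvv, hvu]; ring
      rw [h1, h2]
      simp
    ext i j
    have := congrFun (key (Pi.single j 1)) i
    rw [Matrix.mulVec_mulVec] at this
    simpa using this
  · -- rank ≤ 2
    have hrange : LinearMap.range N.mulVecLin ≤ Submodule.span ℂ {v, u} := by
      rintro y ⟨x, rfl⟩
      rw [Matrix.mulVecLin_apply, hNmul x]
      exact Submodule.add_mem _
        (Submodule.smul_mem _ _ (Submodule.subset_span (by simp)))
        (Submodule.smul_mem _ _ (Submodule.subset_span (by simp)))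
    calc N.rank = Module.finrank ℂ (LinearMap.range N.mulVecLin) := rfl
      _ ≤ Module.finrank ℂ (Submodule.span ℂ ({v, u} : Set (Fin n → ℂ))) :=
          Submodule.finrank_mono hrange
      _ ≤ 2 := by
          classical
          refine (finrank_span_le_card _).trans ?_
          have : ({v, u} : Set (Fin n → ℂ)).toFinset ⊆ {v, u} := by
            intro z hz
            simp at hz ⊢
            tauto
          calc ({v, u} : Set (Fin n → ℂ)).toFinset.card ≤ ({v, u} : Finset (Fin n → ℂ)).card :=
              Finset.card_le_card this
            _ ≤ 2 := Finset.card_insert_le _ _ |>.trans (by simp)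
  · -- vanishes on V^⊥
    intro x hx
    rw [hNmul x, hx u hu, hx v hv]
    simp
  · intro x
    rw [hNmul x]
    exact V.add_mem (V.smul_mem _ hv) (V.smul_mem _ hu)
  · rw [hNmul w, ← hcdef, ← hddef]
    have h1 : α * c = 1 := inv_mul_cancel₀ hc
    have h2 : β * c - star α * d = 0 := by
      have hcs' : (starRingEnd ℂ) c ≠ 0 := hcs
      have hb : β * c = d * (star c)⁻¹ := by
        rw [hβ, mul_inv]
        field_simp
      rw [hb, hα, star_inv₀]
      ring
    rw [h1, h2]
    simp
end
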